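/- Let 1 ≤ k ≤ m and y ∈ ℝ^m, and let (k0, k1) be the index pair of y associated with k. Then for every d ∈ ℝ^m, the one-sided directional derivative of the top-k-sum operator satisfies T_k'(y; d) = Σ_{i : y_i > y_(k)} d_i + T_{k−k0}( (d_i)_{i : y_i = y_(k)} ), i.e., it equals the sum of d over the indices whose y-value strictly exceeds the k-th largest value y_(k), plus the sum of the k−k0 largest entries of d restricted to the indices where y equals y_(k). -/

import Mathlib

open Filter Topology Matrix

noncomputable def topkSum {ι : Type*} [Fintype ι] (k : ℕ) (x : ι → ℝ) : ℝ :=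
  sSup {v : ℝ | ∃ s : Finset ι, s.card = k ∧ v = ∑ i ∈ s, x i}

def Bk (m k : ℕ) : Set (Fin m → ℝ) := {x | topkSum k x ≤ 0}

noncomputable def sortDesc {m : ℕ} (x : Fin m → ℝ) : Fin m → ℝ :=
  fun i => (x ∘ Tuple.sort x) i.rev

noncomputable def ent {m : ℕ} (x : Fin m → ℝ) (i : ℕ) : ℝ :=
  if h : 1 ≤ i ∧ i ≤ m then x ⟨i - 1, by omega⟩ else 0

noncomputable def entE {m : ℕ} (x : Fin m → ℝ) (i : ℕ) : EReal :=
  if h : 1 ≤ i ∧ i ≤ m then ((x ⟨i - 1, by omega⟩ : ℝ) : EReal)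
  else if i = 0 then ⊤ else ⊥

def IsIndexPairOf {m : ℕ} (k : ℕ) (x : Fin m → ℝ) (k0 k1 : ℕ) : Prop :=
  k0 + 1 ≤ k ∧ k ≤ k1 ∧ k1 ≤ m ∧
  entE x (k0 + 1) < entE x k0 ∧
  (∀ i : ℕ, k0 + 1 ≤ i → i ≤ k1 → entE x i = entE x k) ∧
  entE x (k1 + 1) < entE x k1

def IsEProjOn {m : ℕ} (S : Set (Fin m → ℝ)) (y p : Fin m → ℝ) : Prop :=
  p ∈ S ∧ ∀ z ∈ S, ∑ i, (y i - p i) ^ 2 ≤ ∑ i, (y i - z i) ^ 2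

def ProjKKT {m : ℕ} (k : ℕ) (y ybar μ : Fin m → ℝ) (lam θ : ℝ) (k0 k1 : ℕ) : Prop :=
  IsIndexPairOf k ybar k0 k1 ∧
  (∀ i : Fin m, (i : ℕ) < k0 → ybar i = y i - lam ∧ μ i = 1) ∧
  (∀ i : Fin m, k0 ≤ (i : ℕ) → (i : ℕ) < k1 →
      ybar i = y i - lam * μ i ∧ ybar i = θ ∧ 0 ≤ μ i ∧ μ i ≤ 1) ∧
  (∑ i : Fin m, (if k0 ≤ (i : ℕ) ∧ (i : ℕ) < k1 then μ i else 0)) = (k : ℝ) - (k0 : ℝ) ∧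
  (∀ i : Fin m, k1 ≤ (i : ℕ) → ybar i = y i ∧ μ i = 0) ∧
  (∑ i : Fin m, (if (i : ℕ) < k0 then y i else 0)) - (k0 : ℝ) * lam + ((k : ℝ) - (k0 : ℝ)) * θ = 0 ∧
  0 < lam ∧
  (θ : EReal) < entE ybar k0 ∧ entE ybar (k1 + 1) < (θ : EReal)

noncomputable def cvar {m : ℕ} (τ : ℝ) (g : Fin m → ℝ) : ℝ :=
  ⨅ t : ℝ, t + (1 / ((1 - τ) * m)) * ∑ j, max (g j - t) 0

lemma topkSum_eq_sup' {ι : Type*} [Fintype ι] [DecidableEq ι] (k : ℕ)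
    (hne : (Finset.powersetCard k (Finset.univ : Finset ι)).Nonempty) (x : ι → ℝ) :
    topkSum k x = (Finset.powersetCard k (Finset.univ : Finset ι)).sup' hne
      (fun s => ∑ i ∈ s, x i) := by
  rw [Finset.sup'_eq_csSup_image]
  unfold topkSum
  congr 1
  ext v
  simp only [Set.mem_setOf_eq, Set.mem_image, Finset.mem_coe, Finset.mem_powersetCard_univ]
  constructor
  · rintro ⟨s, hc, rfl⟩; exact ⟨s, hc, rfl⟩
  · rintro ⟨s, hc, rfl⟩; exact ⟨s, hc, rfl⟩

lemma topkSum_subtype {ι : Type*} [Fintype ι] [DecidableEq ι] (p : ι → Prop) [DecidablePred p]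
    (j : ℕ) (x : ι → ℝ)
    (hne : ((Finset.univ.filter p).powersetCard j).Nonempty) :
    topkSum j (fun i : {i // p i} => x i)
      = ((Finset.univ.filter p).powersetCard j).sup' hne (fun s => ∑ i ∈ s, x i) := by
  rw [Finset.sup'_eq_csSup_image]
  unfold topkSum
  congr 1
  ext v
  simp only [Set.mem_setOf_eq, Set.mem_image, Finset.mem_coe, Finset.mem_powersetCard]
  constructor
  · rintro ⟨s, hc, rfl⟩
    refine ⟨s.map (Function.Embedding.subtype p), ⟨?_, by simpa using hc⟩, ?_⟩
    · intro i hi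
      simp only [Finset.mem_map, Function.Embedding.coe_subtype] at hi
      obtain ⟨a, _, rfl⟩ := hi
      simp [a.2]
    · rw [Finset.sum_map]; rfl
  · rintro ⟨s, ⟨hsub, hc⟩, rfl⟩
    have hps : ∀ i ∈ s, p i := fun i hi => (Finset.mem_filter.1 (hsub hi)).2
    refine ⟨s.subtype p, ?_, ?_⟩
    · rw [Finset.card_subtype, Finset.filter_true_of_mem hps, hc]
    · have := Finset.subtype_map (s := s) p
      rw [Finset.filter_true_of_mem hps] at this
      conv_lhs => rw [← this, Finset.sum_map]
      rfl

/-- directional derivative of the top-k-sum operator.  With `(k0, k1)` the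
index pair of `y` associated with `k` and `y_(k)` the k-th largest entry of `y`,
`T_k'(y; d) = Σ_{i : y_i > y_(k)} d_i + T_{k-k0}((d_i)_{i : y_i = y_(k)})`. -/
theorem topkSum_dirDeriv
    (m k : ℕ) (hk1 : 1 ≤ k) (hkm : k ≤ m)
    (y : Fin m → ℝ) (k0 k1 : ℕ)
    (hpair : IsIndexPairOf k (sortDesc y) k0 k1) :
    ∀ d : Fin m → ℝ,
      Tendsto (fun t : ℝ => (topkSum k (y + t • d) - topkSum k y) / t)
        (𝓝[>] (0 : ℝ))
        (𝓝 ((∑ i ∈ Finset.univ.filter (fun i : Fin m => ent (sortDesc y) k < y i), d i) +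
          topkSum (k - k0) (fun i : {i : Fin m // y i = ent (sortDesc y) k} => d i))) := by
  obtain ⟨hk0k, hkk1, hk1m, hlt0, hmid, hlt1⟩ := hpair
  intro d
  set z : Fin m → ℝ := sortDesc y with hzdef
  set r : ℝ := ent z k with hrdef
  have hk0m : k0 < m := by omega
  -- z is antitone
  have hz_anti : Antitone z := by
    intro a b hab
    have : (y ∘ Tuple.sort y) b.rev ≤ (y ∘ Tuple.sort y) a.rev :=
      Tuple.monotone_sort y (Fin.rev_le_rev.mpr hab)
    simpa [hzdef, sortDesc] using this
  -- entE evaluation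
  have hentE : ∀ j, 1 ≤ j → ∀ h2 : j ≤ m, entE z j = ((z ⟨j - 1, by omega⟩ : ℝ) : EReal) := by
    intro j h1 h2
    simp only [entE]
    rw [dif_pos ⟨h1, h2⟩]
  have hrk : r = z ⟨k - 1, by omega⟩ := by
    rw [hrdef]
    simp only [ent]
    rw [dif_pos ⟨hk1, hkm⟩]
  -- middle entries equal r
  have hmid' : ∀ i : Fin m, k0 ≤ (i : ℕ) → (i : ℕ) < k1 → z i = r := by
    intro i h1 h2
    have hm := hmid ((i : ℕ) + 1) (by omega) (by omega)
    rw [hentE ((i : ℕ) + 1) (by omega) (by omega), hentE k (by omega) hkm] at hm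
    have hm' : z ⟨(i : ℕ) + 1 - 1, by omega⟩ = z ⟨k - 1, by omega⟩ := by exact_mod_cast hm
    have he : (⟨(i : ℕ) + 1 - 1, by omega⟩ : Fin m) = i := by
      ext; simp
    rw [he] at hm'
    rw [hm', hrk]
  -- entries before k0 are > r
  have hF1 : ∀ i : Fin m, (i : ℕ) < k0 → r < z i := by
    intro i hi
    have hk00 : 1 ≤ k0 := by omega
    have h1 := hlt0
    rw [hentE (k0 + 1) (by omega) (by omega), hentE k0 hk00 (by omega)] at h1
    have h1' : z ⟨k0 + 1 - 1, by omega⟩ < z ⟨k0 - 1, by omega⟩ := by exact_mod_cast h1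
    have he : (⟨k0 + 1 - 1, by omega⟩ : Fin m) = ⟨k0, hk0m⟩ := by ext; simp
    rw [he] at h1'
    have hz0 : z ⟨k0, hk0m⟩ = r := hmid' ⟨k0, hk0m⟩ (le_refl _) (by simp; omega)
    have hle : z ⟨k0 - 1, by omega⟩ ≤ z i := hz_anti (by simp [Fin.le_def]; omega)
    rw [hz0] at h1'
    exact lt_of_lt_of_le h1' hle
  -- entries after k1 are < r
  have hF3 : ∀ i : Fin m, k1 ≤ (i : ℕ) → z i < r := by
    intro i hi
    have hk1m' : k1 < m := lt_of_le_of_lt hi i.isLt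
    have h1 := hlt1
    rw [hentE (k1 + 1) (by omega) (by omega), hentE k1 (by omega) hk1m] at h1
    have h1' : z ⟨k1 + 1 - 1, by omega⟩ < z ⟨k1 - 1, by omega⟩ := by exact_mod_cast h1
    have he : (⟨k1 + 1 - 1, by omega⟩ : Fin m) = ⟨k1, hk1m'⟩ := by ext; simp
    rw [he] at h1'
    have hz1 : z ⟨k1 - 1, by omega⟩ = r :=
      hmid' ⟨k1 - 1, by omega⟩ (by simp; omega) (by simp; omega)
    have hle : z i ≤ z ⟨k1, hk1m'⟩ := hz_anti (by simp [Fin.le_def]; omega)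
    rw [hz1] at h1'
    exact lt_of_le_of_lt hle h1'
  -- the permutation relating z and y
  have hze : ∀ i, z i = y ((Fin.revPerm.trans (Tuple.sort y)) i) := by
    intro i
    simp [hzdef, sortDesc, Equiv.trans_apply]
  set A : Finset (Fin m) := Finset.univ.filter (fun i : Fin m => r < y i) with hAdef
  set E : Finset (Fin m) := Finset.univ.filter (fun i : Fin m => y i = r) with hEdef
  -- card of A
  have hAcard : A.card = k0 := by
    have h1 : (Finset.univ.filter (fun i : Fin m => r < z i)).card = A.card := by
      apply Finset.card_equiv (Fin.revPerm.trans (Tuple.sort y))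
      intro i
      simp only [Finset.mem_filter, Finset.mem_univ, true_and, hAdef, ← hze i]
    have h2 : Finset.univ.filter (fun i : Fin m => r < z i)
        = Finset.univ.filter (fun i : Fin m => (i : ℕ) < k0) := by
      ext i
      simp only [Finset.mem_filter, Finset.mem_univ, true_and]
      constructor
      · intro h
        by_contra hc
        push_neg at hc
        rcases lt_or_ge (i : ℕ) k1 with h' | h'
        · rw [hmid' i hc h'] at h; exact lt_irrefl _ h
        · exact absurd h (not_lt.2 (le_of_lt (hF3 i h')))
      · exact hF1 i
    rw [← h1, h2]
    have h3 : (Finset.univ.filter (fun i : Fin m => (i : ℕ) < k0)).card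
        = (Finset.range k0).card := by
      refine Finset.card_nbij (fun i => (i : ℕ)) ?_ ?_ ?_
      · intro a ha; simp only [Finset.mem_coe, Finset.mem_filter, Finset.mem_univ, true_and] at ha
        simpa using ha
      · intro a _ b _ hab; exact Fin.val_injective hab
      · intro j hj
        simp only [Finset.coe_filter, Finset.mem_univ, true_and, Finset.coe_range,
          Set.mem_Iio] at hj ⊢
        exact ⟨⟨j, by omega⟩, by simpa using hj, rfl⟩
    rw [h3, Finset.card_range]
  -- card of E
  have hEcard : E.card = k1 - k0 := by
    have h1 : (Finset.univ.filter (fun i : Fin m => z i = r)).card = E.card := by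
      apply Finset.card_equiv (Fin.revPerm.trans (Tuple.sort y))
      intro i
      simp only [Finset.mem_filter, Finset.mem_univ, true_and, hEdef, ← hze i]
    have h2 : Finset.univ.filter (fun i : Fin m => z i = r)
        = Finset.univ.filter (fun i : Fin m => k0 ≤ (i : ℕ) ∧ (i : ℕ) < k1) := by
      ext i
      simp only [Finset.mem_filter, Finset.mem_univ, true_and]
      constructor
      · intro h
        constructor
        · by_contra hc; push_neg at hc
          have := hF1 i hc; rw [h] at this; exact lt_irrefl _ this
        · by_contra hc; push_neg at hc
          have := hF3 i hc; rw [h] at this; exact lt_irrefl _ this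
      · intro ⟨ha, hb⟩; exact hmid' i ha hb
    rw [← h1, h2]
    have h3 : (Finset.univ.filter (fun i : Fin m => k0 ≤ (i : ℕ) ∧ (i : ℕ) < k1)).card
        = (Finset.Ico k0 k1).card := by
      refine Finset.card_nbij (fun i => (i : ℕ)) ?_ ?_ ?_
      · intro a ha; simp only [Finset.mem_coe, Finset.mem_filter, Finset.mem_univ, true_and] at ha
        simp [Finset.mem_Ico]; omega
      · intro a _ b _ hab; exact Fin.val_injective hab
      · intro j hj
        simp only [Finset.coe_Ico, Set.mem_Ico] at hj
        simp only [Finset.coe_filter, Finset.mem_univ, true_and, Set.mem_image,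
          Set.mem_setOf_eq]
        exact ⟨⟨j, by omega⟩, by simpa using hj, rfl⟩
    rw [h3, Nat.card_Ico]
  have hAE_disj : Disjoint A E := by
    rw [Finset.disjoint_left]
    intro i hiA hiE
    rw [hAdef, Finset.mem_filter] at hiA
    rw [hEdef, Finset.mem_filter] at hiE
    rw [hiE.2] at hiA
    exact lt_irrefl _ hiA.2
  have hkk0E : k - k0 ≤ E.card := by omega
  -- the target constant value
  set V : ℝ := (∑ i ∈ A, y i) + ((k : ℝ) - (k0 : ℝ)) * r with hVdef
  -- equality case
  have keyEq : ∀ s : Finset (Fin m), s.card = k → A ⊆ s → s ⊆ A ∪ E →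
      (∑ i ∈ s, y i) = V := by
    intro s hsc hAs hsAE
    have h1 : ∑ i ∈ s, y i = (∑ i ∈ s \ A, y i) + ∑ i ∈ A, y i := (Finset.sum_sdiff hAs).symm
    have h2 : ∀ i ∈ s \ A, y i = r := by
      intro i hi
      rcases Finset.mem_sdiff.1 hi with ⟨his, hiA⟩
      rcases Finset.mem_union.1 (hsAE his) with h | h
      · exact absurd h hiA
      · rw [hEdef, Finset.mem_filter] at h; exact h.2
    have h3 : ∑ i ∈ s \ A, y i = ((s \ A).card : ℝ) * r := by
      rw [Finset.sum_congr rfl h2, Finset.sum_const, nsmul_eq_mul]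
    have h4 : (s \ A).card = k - k0 := by
      rw [Finset.card_sdiff_of_subset hAs, hsc, hAcard]
    rw [h1, h3, h4, hVdef]
    have : ((k - k0 : ℕ) : ℝ) = (k : ℝ) - (k0 : ℝ) := by
      push_cast [Nat.cast_sub (by omega : k0 ≤ k)]; ring
    rw [this]; ring
  -- strict inequality case
  have keyLt : ∀ s : Finset (Fin m), s.card = k → ¬(A ⊆ s ∧ s ⊆ A ∪ E) →
      (∑ i ∈ s, y i) < V := by
    intro s hsc hbad
    have hdecs : ∑ i ∈ s, y i = (∑ i ∈ s ∩ A, y i) + ∑ i ∈ s \ A, y i :=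
      (Finset.sum_inter_add_sum_sdiff s A y).symm
    have hdecA : ∑ i ∈ A, y i = (∑ i ∈ A ∩ s, y i) + ∑ i ∈ A \ s, y i :=
      (Finset.sum_inter_add_sum_sdiff A s y).symm
    have hIA : A ∩ s = s ∩ A := Finset.inter_comm _ _
    have c1 : (s ∩ A).card + (s \ A).card = k := by
      rw [Finset.card_inter_add_card_sdiff, hsc]
    have c2 : (s ∩ A).card + (A \ s).card = k0 := by
      rw [← hIA, Finset.card_inter_add_card_sdiff, hAcard]
    have hcast : ((s \ A).card : ℝ) - ((A \ s).card : ℝ) = (k : ℝ) - (k0 : ℝ) := by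
      have c1' : ((s ∩ A).card : ℝ) + ((s \ A).card : ℝ) = (k : ℝ) := by exact_mod_cast c1
      have c2' : ((s ∩ A).card : ℝ) + ((A \ s).card : ℝ) = (k0 : ℝ) := by exact_mod_cast c2
      linarith
    have hub1 : ∀ i ∈ s \ A, y i ≤ r := by
      intro i hi
      rcases Finset.mem_sdiff.1 hi with ⟨_, hiA⟩
      rw [hAdef, Finset.mem_filter] at hiA
      push_neg at hiA
      exact hiA (Finset.mem_univ i)
    have hlb1 : ∀ i ∈ A \ s, r ≤ y i := by
      intro i hi
      rcases Finset.mem_sdiff.1 hi with ⟨hiA, _⟩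
      rw [hAdef, Finset.mem_filter] at hiA
      exact le_of_lt hiA.2
    rcases not_and_or.1 hbad with hc | hc
    · -- A ⊄ s : strict bound on A \ s
      have hne : (A \ s).Nonempty := by
        rw [Finset.sdiff_nonempty]; exact hc
      have hstrict : ((A \ s).card : ℝ) * r < ∑ i ∈ A \ s, y i := by
        have := Finset.sum_lt_sum_of_nonempty hne (f := fun _ => r) (g := y) ?_
        · simpa [Finset.sum_const, nsmul_eq_mul] using this
        · intro i hi
          rcases Finset.mem_sdiff.1 hi with ⟨hiA, _⟩
          rw [hAdef, Finset.mem_filter] at hiA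
          exact hiA.2
      have hweak : ∑ i ∈ s \ A, y i ≤ ((s \ A).card : ℝ) * r := by
        calc ∑ i ∈ s \ A, y i ≤ ∑ _i ∈ s \ A, r := Finset.sum_le_sum hub1
        _ = ((s \ A).card : ℝ) * r := by rw [Finset.sum_const, nsmul_eq_mul]
      have : (∑ i ∈ s ∩ A, y i) = (∑ i ∈ A, y i) - ∑ i ∈ A \ s, y i := by
        rw [hdecA, hIA]; ring
      rw [hdecs, this, hVdef]
      have hc2 : ((s \ A).card : ℝ) * r - ((A \ s).card : ℝ) * r = ((k : ℝ) - (k0 : ℝ)) * r := by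
        linear_combination r * hcast
      linarith [hstrict, hweak, hc2]
    · -- s ⊄ A ∪ E : strict bound on s \ A
      obtain ⟨i0, hi0s, hi0⟩ := Finset.not_subset.1 hc
      have hi0A : i0 ∉ A := fun h => hi0 (Finset.mem_union_left _ h)
      have hi0E : i0 ∉ E := fun h => hi0 (Finset.mem_union_right _ h)
      have hi0lt : y i0 < r := by
        have h1 : y i0 ≤ r := by
          rw [hAdef, Finset.mem_filter] at hi0A; push_neg at hi0A
          exact hi0A (Finset.mem_univ i0)
        have h2 : y i0 ≠ r := by
          rw [hEdef, Finset.mem_filter] at hi0E; push_neg at hi0E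
          exact hi0E (Finset.mem_univ i0)
        exact lt_of_le_of_ne h1 h2
      have hstrict : ∑ i ∈ s \ A, y i < ((s \ A).card : ℝ) * r := by
        have hmem : i0 ∈ s \ A := Finset.mem_sdiff.2 ⟨hi0s, hi0A⟩
        have := Finset.sum_lt_sum (f := y) (g := fun _ => r) hub1 ⟨i0, hmem, hi0lt⟩
        simpa [Finset.sum_const, nsmul_eq_mul] using this
      have hweak : ((A \ s).card : ℝ) * r ≤ ∑ i ∈ A \ s, y i := by
        calc ((A \ s).card : ℝ) * r = ∑ _i ∈ A \ s, r := by rw [Finset.sum_const, nsmul_eq_mul]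
        _ ≤ ∑ i ∈ A \ s, y i := Finset.sum_le_sum hlb1
      have : (∑ i ∈ s ∩ A, y i) = (∑ i ∈ A, y i) - ∑ i ∈ A \ s, y i := by
        rw [hdecA, hIA]; ring
      rw [hdecs, this, hVdef]
      have hc2 : ((s \ A).card : ℝ) * r - ((A \ s).card : ℝ) * r = ((k : ℝ) - (k0 : ℝ)) * r := by
        linear_combination r * hcast
      linarith [hstrict, hweak, hc2]
  -- nonemptiness of the powersets
  have hneK : (Finset.powersetCard k (Finset.univ : Finset (Fin m))).Nonempty :=
    Finset.powersetCard_nonempty.2 (by simpa using hkm)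
  have hneE : (E.powersetCard (k - k0)).Nonempty :=
    Finset.powersetCard_nonempty.2 hkk0E
  obtain ⟨s₀, hs₀mem, hs₀max⟩ := Finset.exists_mem_eq_sup' hneE (fun s => ∑ i ∈ s, d i)
  obtain ⟨hs₀E, hs₀card⟩ := Finset.mem_powersetCard.1 hs₀mem
  have hLs : topkSum (k - k0) (fun i : {i : Fin m // y i = r} => d i)
      = (E.powersetCard (k - k0)).sup' hneE (fun s => ∑ i ∈ s, d i) :=
    topkSum_subtype (fun i : Fin m => y i = r) (k - k0) d hneE
  set L : ℝ := (∑ i ∈ A, d i)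
      + topkSum (k - k0) (fun i : {i : Fin m // y i = r} => d i) with hLdef
  have hdisj₀ : Disjoint A s₀ := hAE_disj.mono_right hs₀E
  set sStar : Finset (Fin m) := A ∪ s₀ with hsStar
  have hsStarCard : sStar.card = k := by
    rw [hsStar, Finset.card_union_of_disjoint hdisj₀, hAcard, hs₀card]; omega
  have hsStarSub : sStar ⊆ A ∪ E := Finset.union_subset_union_right hs₀E
  have hsStarA : A ⊆ sStar := Finset.subset_union_left
  have hsStarSumy : ∑ i ∈ sStar, y i = V := keyEq sStar hsStarCard hsStarA hsStarSub
  have hsStarSumd : ∑ i ∈ sStar, d i = L := by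
    rw [hsStar, Finset.sum_union hdisj₀, hLdef, hLs, hs₀max]
  have hTky : topkSum k y = V := by
    rw [topkSum_eq_sup' k hneK y]
    apply le_antisymm
    · apply Finset.sup'_le
      intro s hs
      have hsc := Finset.mem_powersetCard_univ.1 hs
      by_cases hgood : A ⊆ s ∧ s ⊆ A ∪ E
      · exact le_of_eq (keyEq s hsc hgood.1 hgood.2)
      · exact le_of_lt (keyLt s hsc hgood)
    · calc V = ∑ i ∈ sStar, y i := hsStarSumy.symm
        _ ≤ _ := Finset.le_sup' (fun s => ∑ i ∈ s, y i)
            (Finset.mem_powersetCard_univ.2 hsStarCard)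
  have hgoodd : ∀ s : Finset (Fin m), s.card = k → A ⊆ s → s ⊆ A ∪ E →
      ∑ i ∈ s, d i ≤ L := by
    intro s hsc hAs hsAE
    have h1 : ∑ i ∈ s, d i = (∑ i ∈ s \ A, d i) + ∑ i ∈ A, d i := (Finset.sum_sdiff hAs).symm
    have h2 : s \ A ∈ E.powersetCard (k - k0) := by
      rw [Finset.mem_powersetCard]
      constructor
      · intro i hi
        rcases Finset.mem_sdiff.1 hi with ⟨his, hiA⟩
        rcases Finset.mem_union.1 (hsAE his) with h | h
        · exact absurd h hiA
        · exact h
      · rw [Finset.card_sdiff_of_subset hAs, hsc, hAcard]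
    have h3 : ∑ i ∈ s \ A, d i
        ≤ (E.powersetCard (k - k0)).sup' hneE (fun s => ∑ i ∈ s, d i) :=
      Finset.le_sup' (fun s => ∑ i ∈ s, d i) h2
    rw [h1, hLdef, hLs]
    linarith
  have hsplit : ∀ (s : Finset (Fin m)) (t : ℝ),
      ∑ i ∈ s, (y i + t * d i) = (∑ i ∈ s, y i) + t * ∑ i ∈ s, d i := by
    intro s t
    rw [Finset.sum_add_distrib, Finset.mul_sum]
  have hub : ∀ᶠ t in 𝓝[>] (0:ℝ),
      ∀ s ∈ Finset.powersetCard k (Finset.univ : Finset (Fin m)),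
      ∑ i ∈ s, (y i + t * d i) ≤ V + t * L := by
    rw [eventually_all_finset]
    intro s hs
    have hsc := Finset.mem_powersetCard_univ.1 hs
    by_cases hgood : A ⊆ s ∧ s ⊆ A ∪ E
    · filter_upwards [self_mem_nhdsWithin] with t ht
      rw [hsplit s t, keyEq s hsc hgood.1 hgood.2]
      have hd := hgoodd s hsc hgood.1 hgood.2
      have ht' : (0:ℝ) ≤ t := le_of_lt ht
      nlinarith
    · have hlt := keyLt s hsc hgood
      have hev : ∀ᶠ t in 𝓝 (0:ℝ), (∑ i ∈ s, y i) + t * ∑ i ∈ s, d i < V + t * L := by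
        have hc1 : ContinuousAt (fun t : ℝ => (∑ i ∈ s, y i) + t * ∑ i ∈ s, d i) 0 := by
          fun_prop
        have hc2 : ContinuousAt (fun t : ℝ => V + t * L) 0 := by fun_prop
        have h0 : (∑ i ∈ s, y i) + (0:ℝ) * ∑ i ∈ s, d i < V + (0:ℝ) * L := by
          simpa using hlt
        exact hc1.eventually_lt hc2 h0
      filter_upwards [nhdsWithin_le_nhds hev] with t ht
      rw [hsplit s t]
      exact le_of_lt ht
  have hkey : ∀ᶠ t in 𝓝[>] (0:ℝ), topkSum k (y + t • d) = V + t * L := by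
    filter_upwards [hub, self_mem_nhdsWithin] with t hubt ht
    have happ : ∀ i, (y + t • d) i = y i + t * d i := by
      intro i; simp [Pi.add_apply, Pi.smul_apply, smul_eq_mul]
    rw [topkSum_eq_sup' k hneK (y + t • d)]
    apply le_antisymm
    · apply Finset.sup'_le
      intro s hs
      calc ∑ i ∈ s, (y + t • d) i = ∑ i ∈ s, (y i + t * d i) :=
            Finset.sum_congr rfl (fun i _ => happ i)
        _ ≤ V + t * L := hubt s hs
    · calc V + t * L = ∑ i ∈ sStar, (y i + t * d i) := by
            rw [hsplit sStar t, hsStarSumy, hsStarSumd]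
        _ = ∑ i ∈ sStar, (y + t • d) i := Finset.sum_congr rfl (fun i _ => (happ i).symm)
        _ ≤ _ := Finset.le_sup' (fun s => ∑ i ∈ s, (y + t • d) i)
            (Finset.mem_powersetCard_univ.2 hsStarCard)
  have heq : (fun t : ℝ => (topkSum k (y + t • d) - topkSum k y) / t) =ᶠ[𝓝[>] (0:ℝ)]
      (fun _ => L) := by
    filter_upwards [hkey, self_mem_nhdsWithin] with t h ht
    rw [h, hTky]
    have ht' : t ≠ 0 := ne_of_gt ht
    field_simp
    ring
  exact Tendsto.congr' heq.symm tendsto_const_nhds
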